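/- Let γ be a nonnegative real eigenvalue of A with unit eigenvector u, and V = I_d. For X := (u, u/2, …, u/2) ∈ (ℝ^d)^n and any R > 0, the operator norm of the Jacobian of self-attention at RX satisfies ‖D_{RX} f‖₂ ≥ √(n-1) / (1 + (n-1) e^{-R²γ/4}). -/

import Mathlib

open Matrix

/-- Self-attention (with `V = I`) as a map between sequence spaces with the Frobenius norm. -/
noncomputable def attnF (n d : ℕ) (A : Matrix (Fin d) (Fin d) ℝ) :
    PiLp 2 (fun _ : Fin n => EuclideanSpace ℝ (Fin d)) →
      PiLp 2 (fun _ : Fin n => EuclideanSpace ℝ (Fin d)) :=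
  fun x => WithLp.toLp 2 (fun i => ∑ j, (Real.exp ((x i) ⬝ᵥ (Aᵀ.mulVec (x j))) /
      ∑ l, Real.exp ((x i) ⬝ᵥ (Aᵀ.mulVec (x l)))) • x j)

lemma sum_ite_fin {n : ℕ} {V : Type*} [AddCommGroup V] [Module ℝ V] (hn : 0 < n) (A B : V) :
    ∑ j : Fin n, (if (j : Fin n).val = 0 then A else B) = A + (((n : ℝ) - 1)) • B := by
  have hi0 : (⟨0, hn⟩ : Fin n) ∈ Finset.univ := Finset.mem_univ _
  rw [← Finset.add_sum_erase _ _ hi0]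
  simp only [if_pos rfl]
  congr 1
  rw [Finset.sum_congr rfl (fun j hj => ?_), Finset.sum_const,
    Finset.card_erase_of_mem hi0, Finset.card_univ, Fintype.card_fin]
  · rw [← Nat.cast_smul_eq_nsmul ℝ]
    congr 1
    push_cast [Nat.cast_sub hn]
    ring
  · rw [if_neg]
    intro hj0
    exact (Finset.mem_erase.mp hj).1 (Fin.ext hj0)

noncomputable def aAux (γ R t : ℝ) : ℝ := Real.exp (R / 2 * (R + t) * γ)

noncomputable def psiAux (γ R b t : ℝ) : ℝ :=
  (aAux γ R t * (R + t) + b * (R / 2)) / (aAux γ R t + b)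

noncomputable def vAux (γ R b : ℝ) : ℝ :=
  aAux γ R 0 / (aAux γ R 0 + b) + γ * R ^ 2 / 4 * (aAux γ R 0 * b) / (aAux γ R 0 + b) ^ 2

lemma psiAux_hasDeriv (γ R b : ℝ) (hb : 0 ≤ b) :
    HasDerivAt (psiAux γ R b) (vAux γ R b) 0 := by
  have hA0 : (0:ℝ) < aAux γ R 0 := Real.exp_pos _
  have hd0 : aAux γ R 0 + b ≠ 0 := by positivity
  have h1 : HasDerivAt (fun t : ℝ => R + t) 1 0 := by
    simpa using (hasDerivAt_id (0:ℝ)).const_add R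
  have h2 : HasDerivAt (fun t : ℝ => R / 2 * (R + t) * γ) (R / 2 * 1 * γ) 0 :=
    (h1.const_mul (R / 2)).mul_const γ
  have ha : HasDerivAt (aAux γ R) (Real.exp (R / 2 * (R + 0) * γ) * (R / 2 * 1 * γ)) 0 := h2.exp
  have hnum : HasDerivAt (fun t => aAux γ R t * (R + t) + b * (R / 2))
      (Real.exp (R / 2 * (R + 0) * γ) * (R / 2 * 1 * γ) * (R + 0) + aAux γ R 0 * 1) 0 :=
    (ha.mul h1).add_const _
  have hden : HasDerivAt (fun t => aAux γ R t + b)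
      (Real.exp (R / 2 * (R + 0) * γ) * (R / 2 * 1 * γ)) 0 := ha.add_const b
  have := hnum.div hden hd0
  have heq : (fun t => (aAux γ R t * (R + t) + b * (R / 2)) / (aAux γ R t + b)) = psiAux γ R b :=
    rfl
  change HasDerivAt (psiAux γ R b) _ 0 at this
  convert this using 1
  have hA0' : Real.exp (R / 2 * (R + 0) * γ) = aAux γ R 0 := rfl
  rw [hA0']
  rw [vAux]
  field_simp
  ring

lemma vAux_ge (γ R m : ℝ) (hγ : 0 ≤ γ) (hR : 0 < R) (hm : 0 ≤ m) :
    1 / (1 + m * Real.exp (-(R ^ 2) * γ / 4)) ≤ vAux γ R (m * Real.exp (R / 2 * (R / 2) * γ)) := by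
  set E : ℝ := Real.exp (R / 2 * (R / 2) * γ) with hE
  have hEpos : 0 < E := Real.exp_pos _
  have hA0 : aAux γ R 0 = E * E := by
    rw [aAux, hE, ← Real.exp_add]
    congr 1
    ring
  have he4 : Real.exp (-(R ^ 2) * γ / 4) = E⁻¹ := by
    rw [hE, ← Real.exp_neg]
    congr 1
    ring
  rw [he4, vAux, hA0]
  have hkey : 1 / (1 + m * E⁻¹) = E * E / (E * E + m * E) := by
    rw [div_eq_div_iff (by positivity) (by positivity)]
    field_simp
  rw [hkey]
  exact le_add_of_nonneg_right (by positivity)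

lemma attn_differentiable {n d : ℕ} (hn : 0 < n) (A : Matrix (Fin d) (Fin d) ℝ) :
    Differentiable ℝ (attnF n d A) := by
  have hne : Nonempty (Fin n) := Fin.pos_iff_nonempty.mp hn
  have hproj : ∀ (i : Fin n) (k : Fin d),
      Differentiable ℝ (fun x : PiLp 2 (fun _ : Fin n => EuclideanSpace ℝ (Fin d)) => x i k) :=
    fun i k =>
      (PiLp.proj (𝕜 := ℝ) 2 (fun _ : Fin d => ℝ) k).differentiable.comp
        ((PiLp.proj (𝕜 := ℝ) 2 (fun _ : Fin n => EuclideanSpace ℝ (Fin d)) i).differentiable)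
  have hs : ∀ i j : Fin n,
      Differentiable ℝ (fun x : PiLp 2 (fun _ : Fin n => EuclideanSpace ℝ (Fin d)) =>
        (x i) ⬝ᵥ (Aᵀ.mulVec (x j))) := by
    intro i j
    have : (fun x : PiLp 2 (fun _ : Fin n => EuclideanSpace ℝ (Fin d)) =>
        (x i) ⬝ᵥ (Aᵀ.mulVec (x j)))
        = fun x => ∑ k, (x i k) * ∑ m, Aᵀ k m * x j m := by
      funext x
      simp [dotProduct, Matrix.mulVec]
    rw [this]
    exact Differentiable.fun_sum fun k _ =>
      (hproj i k).mul (Differentiable.fun_sum fun m _ => (hproj j m).const_mul _)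
  have hden : ∀ (i : Fin n) (x : PiLp 2 (fun _ : Fin n => EuclideanSpace ℝ (Fin d))),
      (∑ l, Real.exp ((x i) ⬝ᵥ (Aᵀ.mulVec (x l)))) ≠ 0 := by
    intro i x
    exact ne_of_gt (Finset.sum_pos (fun l _ => Real.exp_pos _) Finset.univ_nonempty)
  have hcomp : ∀ i : Fin n,
      Differentiable ℝ (fun x : PiLp 2 (fun _ : Fin n => EuclideanSpace ℝ (Fin d)) =>
        ∑ j, (Real.exp ((x i) ⬝ᵥ (Aᵀ.mulVec (x j))) /
          ∑ l, Real.exp ((x i) ⬝ᵥ (Aᵀ.mulVec (x l)))) • x j) := by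
    intro i
    simp only [div_eq_mul_inv]
    exact Differentiable.fun_sum fun j _ =>
      (((hs i j).exp.mul ((Differentiable.fun_sum fun l _ => (hs i l).exp).inv (hden i))).smul
        (PiLp.proj (𝕜 := ℝ) 2 (fun _ : Fin n => EuclideanSpace ℝ (Fin d)) j).differentiable)
  have heq : attnF n d A =
      ⇑(PiLp.continuousLinearEquiv 2 ℝ (fun _ : Fin n => EuclideanSpace ℝ (Fin d))).symm ∘
        (fun x => (fun i => ∑ j, (Real.exp ((x i) ⬝ᵥ (Aᵀ.mulVec (x j))) /
          ∑ l, Real.exp ((x i) ⬝ᵥ (Aᵀ.mulVec (x l)))) • x j)) := by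
    rw [PiLp.coe_symm_continuousLinearEquiv]; rfl
  rw [heq]
  exact (PiLp.continuousLinearEquiv 2 ℝ
    (fun _ : Fin n => EuclideanSpace ℝ (Fin d))).symm.differentiable.comp
    (differentiable_pi.mpr hcomp)


instance piLpEuclid_continuousSMul (n d : ℕ) :
    ContinuousSMul ℝ (PiLp 2 (fun _ : Fin n => EuclideanSpace ℝ (Fin d))) := inferInstance

/-- lower bound on the Jacobian norm of self-attention at
`R·(u, u/2, …, u/2)` for a nonnegative eigenvalue `γ` of `A` with unit eigenvector `u`. -/
theorem attn_jacobian_lower_bound_nonneg_eigenvalue {n d : ℕ} (hn : 0 < n)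
    (A : Matrix (Fin d) (Fin d) ℝ) (γ : ℝ) (hγ : 0 ≤ γ)
    (u : EuclideanSpace ℝ (Fin d)) (hu : ‖u‖ = 1) (hAu : A.mulVec u = γ • u)
    (R : ℝ) (hR : 0 < R)
    (X : PiLp 2 (fun _ : Fin n => EuclideanSpace ℝ (Fin d)))
    (hX : X = fun i : Fin n => if i.val = 0 then u else (1 / 2 : ℝ) • u) :
    Real.sqrt ((n : ℝ) - 1) / (1 + ((n : ℝ) - 1) * Real.exp (-(R ^ 2) * γ / 4)) ≤
      ‖fderiv ℝ (attnF n d A) (R • X)‖ := by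
  have hm : (0:ℝ) ≤ (n : ℝ) - 1 := by
    have : (1:ℝ) ≤ (n:ℝ) := by exact_mod_cast hn
    linarith
  -- dot product facts
  have huu : u ⬝ᵥ u = 1 := by
    have h2 : (inner ℝ u u : ℝ) = u ⬝ᵥ u := by
      simp [PiLp.inner_apply, RCLike.inner_apply, conj_trivial, dotProduct]
      rw [EuclideanSpace.norm_eq, Real.sq_sqrt (by positivity)]
      simp [Real.norm_eq_abs, sq_abs, sq]
    have h3 : (inner ℝ u u : ℝ) = 1 := by
      rw [real_inner_self_eq_norm_sq, hu]; norm_num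
    rw [← h2, h3]
  have hdot : ∀ a c : ℝ, (a • u) ⬝ᵥ Aᵀ.mulVec ((c • u : EuclideanSpace ℝ (Fin d))) = a * c * γ := by
    intro a c
    have hdotu : u ⬝ᵥ Aᵀ.mulVec u = γ := by
      rw [Matrix.dotProduct_mulVec, Matrix.vecMul_transpose, hAu]
      show (γ • (u : Fin d → ℝ)) ⬝ᵥ u = γ
      rw [smul_dotProduct, huu, smul_eq_mul, mul_one]
    show (a • (u : Fin d → ℝ)) ⬝ᵥ Aᵀ.mulVec (c • (u : Fin d → ℝ)) = a * c * γ
    rw [smul_dotProduct, Matrix.mulVec_smul, dotProduct_smul, hdotu,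
      smul_eq_mul, smul_eq_mul]
    ring
  -- the perturbation direction
  set h : PiLp 2 (fun _ : Fin n => EuclideanSpace ℝ (Fin d)) :=
    WithLp.toLp 2 (fun i : Fin n => if (i : Fin n).val = 0 then u else 0) with hh
  -- values along the curve
  have hy : ∀ (t : ℝ) (i : Fin n),
      (R • X + t • h) i = (if (i : Fin n).val = 0 then R + t else R / 2) • u := by
    intro t i
    have : (R • X + t • h) i = R • X i + t • h i := rfl
    rw [this, hX, hh, WithLp.ofLp_toLp]
    by_cases hi : i.val = 0
    · simp only [hi, if_pos rfl, if_true]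
      rw [add_smul]
    · simp only [hi, if_false, if_neg hi]
      rw [smul_zero, add_zero, smul_smul]
      congr 1
      ring
  set b : ℝ := ((n : ℝ) - 1) * Real.exp (R / 2 * (R / 2) * γ) with hb
  have hbnn : 0 ≤ b := by positivity
  have hApos : (0:ℝ) < aAux γ R 0 := Real.exp_pos _
  -- the curve, componentwise, away from index 0
  have hcurve : ∀ (i : Fin n), (i : Fin n).val ≠ 0 → ∀ t : ℝ,
      attnF n d A (R • X + t • h) i = psiAux γ R b t • u := by
    intro i hi t
    have hterm : ∀ j : Fin n,
        (R • X + t • h) i ⬝ᵥ Aᵀ.mulVec ((R • X + t • h) j)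
          = if (j : Fin n).val = 0 then R / 2 * (R + t) * γ else R / 2 * (R / 2) * γ := by
      intro j
      rw [hy, hy, if_neg hi]
      by_cases hj : j.val = 0
      · rw [if_pos hj, if_pos hj, hdot]
      · rw [if_neg hj, if_neg hj, hdot]
    have hDen : (∑ l, Real.exp ((R • X + t • h) i ⬝ᵥ Aᵀ.mulVec ((R • X + t • h) l)))
        = aAux γ R t + b := by
      rw [Finset.sum_congr rfl fun l _ => by
        rw [hterm l, apply_ite Real.exp]]
      rw [sum_ite_fin hn, aAux, hb, smul_eq_mul]
    show (∑ j, (Real.exp ((R • X + t • h) i ⬝ᵥ Aᵀ.mulVec ((R • X + t • h) j)) /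
        ∑ l, Real.exp ((R • X + t • h) i ⬝ᵥ Aᵀ.mulVec ((R • X + t • h) l))) • (R • X + t • h) j)
        = psiAux γ R b t • u
    rw [Finset.sum_congr rfl fun j _ => by
      rw [hterm j, hDen, hy, apply_ite Real.exp]]
    have hsplit : ∀ j : Fin n,
        ((if (j : Fin n).val = 0 then Real.exp (R / 2 * (R + t) * γ)
            else Real.exp (R / 2 * (R / 2) * γ)) / (aAux γ R t + b)) •
          ((if (j : Fin n).val = 0 then R + t else R / 2) • u)
        = if (j : Fin n).val = 0
            then (Real.exp (R / 2 * (R + t) * γ) / (aAux γ R t + b) * (R + t)) • u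
            else (Real.exp (R / 2 * (R / 2) * γ) / (aAux γ R t + b) * (R / 2)) • u := by
      intro j
      by_cases hj : j.val = 0
      · rw [if_pos hj, if_pos hj, if_pos hj, smul_smul]
      · rw [if_neg hj, if_neg hj, if_neg hj, smul_smul]
    rw [Finset.sum_congr rfl fun j _ => hsplit j, sum_ite_fin hn, smul_smul,
      ← add_smul]
    congr 1
    rw [psiAux, aAux, hb]
    have hd0 : Real.exp (R / 2 * (R + t) * γ) + ((n:ℝ)-1) * Real.exp (R / 2 * (R / 2) * γ) ≠ 0 := by
      positivity
    field_simp
  -- differentiability and derivative of the curve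
  have hF : HasFDerivAt (attnF n d A) (fderiv ℝ (attnF n d A) (R • X)) (R • X) :=
    ((attn_differentiable hn A) (R • X)).hasFDerivAt
  have hline : HasDerivAt (fun t : ℝ => R • X + t • h) h 0 := by
    have h0 : HasDerivAt (fun t : ℝ => t • h) ((1:ℝ) • h) 0 := (hasDerivAt_id (0:ℝ)).smul_const h
    simpa using h0.const_add (R • X)
  have hLh : HasDerivAt (fun t : ℝ => attnF n d A (R • X + t • h))
      (fderiv ℝ (attnF n d A) (R • X) h) 0 := by
    have hF' : HasFDerivAt (attnF n d A) (fderiv ℝ (attnF n d A) (R • X))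
        ((fun t : ℝ => R • X + t • h) 0) := by simpa using hF
    exact hF'.comp_hasDerivAt 0 hline
  have hψ : HasDerivAt (psiAux γ R b) (vAux γ R b) 0 := psiAux_hasDeriv γ R b hbnn
  have hLhi : ∀ (i : Fin n), (i : Fin n).val ≠ 0 →
      fderiv ℝ (attnF n d A) (R • X) h i = vAux γ R b • u := by
    intro i hi
    have hci : HasDerivAt (fun t : ℝ => attnF n d A (R • X + t • h) i)
        (fderiv ℝ (attnF n d A) (R • X) h i) 0 :=
      (PiLp.proj (𝕜 := ℝ) 2 (fun _ : Fin n => EuclideanSpace ℝ (Fin d)) i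
        ).hasFDerivAt.comp_hasDerivAt 0 hLh
    have heq : (fun t : ℝ => attnF n d A (R • X + t • h) i)
        = fun t : ℝ => psiAux γ R b t • u := funext (hcurve i hi)
    rw [heq] at hci
    exact hci.unique (hψ.smul_const u)
  -- norm of h
  have hnh : ‖h‖ = 1 := by
    rw [PiLp.norm_eq_of_L2]
    have hhn : ∀ i : Fin n, ‖h i‖ ^ 2 = if (i : Fin n).val = 0 then (1:ℝ) else 0 := by
      intro i
      by_cases hi : i.val = 0 <;> simp [hh, hi, hu]
    rw [Finset.sum_congr rfl fun i _ => hhn i, sum_ite_fin hn, smul_zero, add_zero,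
      Real.sqrt_one]
  -- assemble
  have he4 : (0:ℝ) < 1 + ((n : ℝ) - 1) * Real.exp (-(R ^ 2) * γ / 4) := by positivity
  have hP : (0:ℝ) < 1 / (1 + ((n : ℝ) - 1) * Real.exp (-(R ^ 2) * γ / 4)) := by positivity
  have hPv : 1 / (1 + ((n : ℝ) - 1) * Real.exp (-(R ^ 2) * γ / 4)) ≤ vAux γ R b :=
    vAux_ge γ R ((n : ℝ) - 1) hγ hR hm
  set P : ℝ := 1 / (1 + ((n : ℝ) - 1) * Real.exp (-(R ^ 2) * γ / 4)) with hPdef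
  have hsum : ((n : ℝ) - 1) * P ^ 2 ≤ ∑ i, ‖fderiv ℝ (attnF n d A) (R • X) h i‖ ^ 2 := by
    have hsub : ∑ i ∈ Finset.univ.erase (⟨0, hn⟩ : Fin n),
        ‖fderiv ℝ (attnF n d A) (R • X) h i‖ ^ 2
        ≤ ∑ i, ‖fderiv ℝ (attnF n d A) (R • X) h i‖ ^ 2 :=
      Finset.sum_le_sum_of_subset_of_nonneg (Finset.erase_subset _ _)
        (fun i _ _ => sq_nonneg _)
    have hval : ∀ i ∈ Finset.univ.erase (⟨0, hn⟩ : Fin n),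
        ‖fderiv ℝ (attnF n d A) (R • X) h i‖ ^ 2 = vAux γ R b ^ 2 := by
      intro i hi
      have hiv : (i : Fin n).val ≠ 0 := fun hv => (Finset.mem_erase.mp hi).1 (Fin.ext hv)
      rw [hLhi i hiv, norm_smul, hu, mul_one, Real.norm_eq_abs, sq_abs]
    have hcard : ∑ i ∈ Finset.univ.erase (⟨0, hn⟩ : Fin n),
        ‖fderiv ℝ (attnF n d A) (R • X) h i‖ ^ 2 = ((n : ℝ) - 1) * vAux γ R b ^ 2 := by
      rw [Finset.sum_congr rfl hval, Finset.sum_const, Finset.card_erase_of_mem (Finset.mem_univ _),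
        Finset.card_univ, Fintype.card_fin, nsmul_eq_mul]
      congr 1
      push_cast [Nat.cast_sub hn]
      ring
    have hsq : P ^ 2 ≤ vAux γ R b ^ 2 := pow_le_pow_left₀ hP.le hPv 2
    calc ((n : ℝ) - 1) * P ^ 2 ≤ ((n : ℝ) - 1) * vAux γ R b ^ 2 :=
          mul_le_mul_of_nonneg_left hsq hm
      _ = _ := hcard.symm
      _ ≤ _ := hsub
  have hnormLh : Real.sqrt ((n : ℝ) - 1) * P ≤ ‖fderiv ℝ (attnF n d A) (R • X) h‖ := by
    rw [PiLp.norm_eq_of_L2]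
    calc Real.sqrt ((n : ℝ) - 1) * P = Real.sqrt (((n : ℝ) - 1) * P ^ 2) := by
          rw [Real.sqrt_mul hm, Real.sqrt_sq hP.le]
      _ ≤ _ := Real.sqrt_le_sqrt hsum
  have hle : ‖fderiv ℝ (attnF n d A) (R • X) h‖ ≤ ‖fderiv ℝ (attnF n d A) (R • X)‖ := by
    have h1 := (fderiv ℝ (attnF n d A) (R • X)).le_opNorm h
    rw [hnh, mul_one] at h1
    exact h1
  have hgoal : Real.sqrt ((n : ℝ) - 1) / (1 + ((n : ℝ) - 1) * Real.exp (-(R ^ 2) * γ / 4))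
      = Real.sqrt ((n : ℝ) - 1) * P := by
    rw [hPdef, div_eq_mul_one_div]
  rw [hgoal]
  exact hnormLh.trans hle
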